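/- Let Γ be an infinite set, let G be a group of permutations of Γ, and let Y be the vector space c₀(Γ) endowed with an equivalent strictly convex norm. If the family F_{G,Γ} of finite orbits of the action of G on Γ is finite, then every G-invariant bounded linear operator from c₀(Γ) to Y attains its norm, i.e. L_G(c₀(Γ),Y) = NA_G(c₀(Γ),Y). -/

import Mathlib

open scoped Cardinal

noncomputable section

universe u

/-- The homeomorphism of a discrete space induced by a permutation. -/
def permHomeo {Γ : Type u} [TopologicalSpace Γ] [DiscreteTopology Γ] (g : Equiv.Perm Γ) :
    Γ ≃ₜ Γ :=
  { g with
    continuous_toFun := continuous_of_discreteTopology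
    continuous_invFun := continuous_of_discreteTopology }

/-- The isometric action of a permutation `g` of `Γ` on `c₀(Γ)`, determined on the canonical
unit vectors by `g • e_γ = e_{g γ}` (so that `(g • x) γ = x (g⁻¹ γ)`). -/
def permC0 {𝕜 : Type u} [RCLike 𝕜] {Γ : Type u} [TopologicalSpace Γ] [DiscreteTopology Γ]
    (g : Equiv.Perm Γ) (x : ZeroAtInftyContinuousMap Γ 𝕜) : ZeroAtInftyContinuousMap Γ 𝕜 :=
  x.comp (permHomeo (g⁻¹ : Equiv.Perm Γ)).toCocompactMap

/-- The orbit of `γ` under a group `G` of permutations of `Γ`. -/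
def orbitOf {Γ : Type u} (G : Subgroup (Equiv.Perm Γ)) (γ : Γ) : Set Γ :=
  {δ : Γ | ∃ g ∈ G, g γ = δ}

/-- The set of orbits of the action of `G` on `Γ`. -/
def orbitsOf {Γ : Type u} (G : Subgroup (Equiv.Perm Γ)) : Set (Set Γ) :=
  Set.range (orbitOf G)

/-- `F_{G,Γ}^N` : the set of orbits of the action of `G` on `Γ` of cardinality at most `N`. -/
def FGN {Γ : Type u} (G : Subgroup (Equiv.Perm Γ)) (N : ℕ) : Set (Set Γ) :=
  {S ∈ orbitsOf G | Cardinal.mk S ≤ (N : Cardinal)}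

/-- `|G|_∞` : the supremum of the (infinite) cardinalities of the families `F_{G,Γ}^N`,
`N ∈ ℕ`, whenever one of them is infinite, and `0` otherwise. -/
def GInftyCard {Γ : Type u} (G : Subgroup (Equiv.Perm Γ)) : Cardinal :=
  sSup {c : Cardinal | ∃ N : ℕ, c = Cardinal.mk (FGN G N) ∧ Cardinal.aleph0 ≤ c}

/-- A bounded linear operator attains its norm. -/
def NormAttains {𝕜 : Type*} [RCLike 𝕜] {X Y : Type*} [SeminormedAddCommGroup X]
    [SeminormedAddCommGroup Y] [NormedSpace 𝕜 X] [NormedSpace 𝕜 Y] (T : X →L[𝕜] Y) : Prop :=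
  ∃ x : X, ‖x‖ = 1 ∧ ‖T x‖ = ‖T‖

/-- A set `M` in a topological vector space is `μ`-lineable if `M ∪ {0}` contains a vector
subspace of dimension `μ`. -/
def Lineable (𝕜 : Type*) {V : Type*} [NormedField 𝕜] [AddCommGroup V] [Module 𝕜 V]
    (M : Set V) (μ : Cardinal) : Prop :=
  ∃ W : Submodule 𝕜 V, Module.rank 𝕜 W = μ ∧ (W : Set V) ⊆ M ∪ {0}

/-- A set `M` in a topological vector space is `μ`-spaceable if `M ∪ {0}` contains a closed
vector subspace of dimension `μ`. -/
def Spaceable (𝕜 : Type*) {V : Type*} [NormedField 𝕜] [AddCommGroup V] [Module 𝕜 V]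
    [TopologicalSpace V] (M : Set V) (μ : Cardinal) : Prop :=
  ∃ W : Submodule 𝕜 V, IsClosed (W : Set V) ∧ Module.rank 𝕜 W = μ ∧ (W : Set V) ⊆ M ∪ {0}

/-- A set `M` in a topological vector space is `(α,β)`-spaceable if it is `α`-lineable and every
`α`-dimensional subspace of `M ∪ {0}` is contained in a closed `β`-dimensional subspace of
`M ∪ {0}`. -/
def ABSpaceable (𝕜 : Type*) {V : Type*} [NormedField 𝕜] [AddCommGroup V] [Module 𝕜 V]
    [TopologicalSpace V] (M : Set V) (α β : Cardinal) : Prop :=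
  Lineable 𝕜 M α ∧
    ∀ W : Submodule 𝕜 V, Module.rank 𝕜 W = α → (W : Set V) ⊆ M ∪ {0} →
      ∃ W' : Submodule 𝕜 V, IsClosed (W' : Set V) ∧ Module.rank 𝕜 W' = β ∧ W ≤ W' ∧
        (W' : Set V) ⊆ M ∪ {0}


namespace MyAux
open scoped Classical

variable {𝕜 : Type u} [RCLike 𝕜] {Γ : Type u} [TopologicalSpace Γ] [DiscreteTopology Γ]

set_option linter.unusedSectionVars false

/-- canonical unit vector in `c₀(Γ)` -/
def eC0 (𝕜 : Type u) [RCLike 𝕜] {Γ : Type u} [TopologicalSpace Γ] [DiscreteTopology Γ]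
    (γ : Γ) : ZeroAtInftyContinuousMap Γ 𝕜 where
  toFun := fun δ => if δ = γ then (1 : 𝕜) else 0
  continuous_toFun := continuous_of_discreteTopology
  zero_at_infty' := by
    have hmem : ({γ}ᶜ : Set Γ) ∈ Filter.cocompact Γ :=
      Filter.mem_cocompact.mpr ⟨{γ}, isCompact_singleton, subset_rfl⟩
    refine Filter.Tendsto.congr' ?_ tendsto_const_nhds
    filter_upwards [hmem] with δ hδ
    exact (if_neg hδ).symm

@[simp] lemma eC0_apply (γ δ : Γ) : eC0 𝕜 γ δ = if δ = γ then (1 : 𝕜) else 0 := rfl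

lemma sum_apply {ι : Type*} (s : Finset ι) (f : ι → ZeroAtInftyContinuousMap Γ 𝕜) (γ : Γ) :
    (∑ i ∈ s, f i) γ = ∑ i ∈ s, f i γ := by
  induction s using Finset.induction with
  | empty => simp
  | insert _ _ h ih => simp [Finset.sum_insert h, ih]

lemma norm_le_of_forall {f : ZeroAtInftyContinuousMap Γ 𝕜} {C : ℝ} (hC : 0 ≤ C)
    (h : ∀ γ, ‖f γ‖ ≤ C) : ‖f‖ ≤ C := by
  rw [← ZeroAtInftyContinuousMap.norm_toBCF_eq_norm]
  exact (BoundedContinuousFunction.norm_le hC).mpr h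

lemma apply_norm_le (f : ZeroAtInftyContinuousMap Γ 𝕜) (γ : Γ) : ‖f γ‖ ≤ ‖f‖ := by
  rw [← ZeroAtInftyContinuousMap.norm_toBCF_eq_norm]
  exact BoundedContinuousFunction.norm_coe_le_norm f.toBCF γ

lemma permC0_eC0 (g : Equiv.Perm Γ) (γ : Γ) :
    permC0 g (eC0 𝕜 γ) = eC0 𝕜 (g γ) := by
  ext δ
  show eC0 𝕜 γ ((g⁻¹ : Equiv.Perm Γ) δ) = eC0 𝕜 (g γ) δ
  simp only [eC0_apply]
  congr 1
  simp only [eq_iff_iff]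
  constructor
  · rintro h; rw [← h]; exact (g.apply_symm_apply δ).symm
  · rintro rfl; exact g.symm_apply_apply γ

end MyAux

/-- Let `Γ` be an infinite set, `G` a group of permutations of `Γ` and `Y` the
space `c₀(Γ)` endowed with an equivalent strictly convex norm.  If the family of finite orbits of
the action of `G` on `Γ` is finite, then every `G`-invariant bounded linear operator from
`c₀(Γ)` to `Y` attains its norm. -/
theorem finite_orbits_imp_all_norm_attaining
    {𝕜 : Type u} [RCLike 𝕜] {Γ : Type u} [TopologicalSpace Γ] [DiscreteTopology Γ] [Infinite Γ]
    {Y : Type u} [NormedAddCommGroup Y] [NormedSpace 𝕜 Y] [CompleteSpace Y]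
    -- `Y` is a renorming of `c₀(Γ)`:
    (equiv : ZeroAtInftyContinuousMap Γ 𝕜 ≃L[𝕜] Y)
    -- `Y` is strictly convex:
    (hY : ∀ y₁ y₂ : Y, ‖y₁‖ = 1 → ‖y₂‖ = 1 → y₁ ≠ y₂ → ‖y₁ + y₂‖ < 2)
    (G : Subgroup (Equiv.Perm Γ))
    -- the family `F_{G,Γ}` of finite orbits is finite:
    (hfin : {S ∈ orbitsOf G | S.Finite}.Finite)
    (T : ZeroAtInftyContinuousMap Γ 𝕜 →L[𝕜] Y)
    -- `T` is `G`-invariant: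
    (hT : ∀ g ∈ G, ∀ x : ZeroAtInftyContinuousMap Γ 𝕜, T (permC0 g x) = T x) :
    NormAttains T := by
  classical
  open MyAux in
  -- `T` kills unit vectors with infinite orbit
  have hA : ∀ γ : Γ, ¬ (orbitOf G γ).Finite → T (eC0 𝕜 γ) = 0 := by
    intro γ hγ
    have hinf : (orbitOf G γ).Infinite := hγ
    have horb : ∀ δ ∈ orbitOf G γ, T (eC0 𝕜 δ) = T (eC0 𝕜 γ) := by
      rintro δ ⟨g, hg, rfl⟩
      rw [← permC0_eC0, hT g hg]
    have key : ∀ n : ℕ, (n : ℝ) * ‖T (eC0 𝕜 γ)‖ ≤ ‖T‖ := by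
      intro n
      obtain ⟨s, hs, hcard⟩ := hinf.exists_subset_card_eq n
      set x : ZeroAtInftyContinuousMap Γ 𝕜 := ∑ δ ∈ s, eC0 𝕜 δ with hx
      have hxnorm : ‖x‖ ≤ 1 := by
        refine norm_le_of_forall zero_le_one fun δ' => ?_
        rw [hx, MyAux.sum_apply]
        have : (∑ δ ∈ s, eC0 𝕜 δ δ') = if δ' ∈ s then (1:𝕜) else 0 := by
          simp only [eC0_apply]
          exact Finset.sum_ite_eq s δ' (fun _ => (1:𝕜))
        rw [this]
        split <;> simp
      have hTx : T x = (n : 𝕜) • T (eC0 𝕜 γ) := by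
        rw [hx, map_sum]
        rw [Finset.sum_congr rfl (fun δ hδ => horb δ (hs hδ))]
        simp [hcard, Nat.cast_smul_eq_nsmul 𝕜]
      have h1 : ‖T x‖ ≤ ‖T‖ := by
        calc ‖T x‖ ≤ ‖T‖ * ‖x‖ := T.le_opNorm x
        _ ≤ ‖T‖ * 1 := by gcongr
        _ = ‖T‖ := mul_one _
      rw [hTx, norm_smul] at h1
      simpa using h1
    by_contra hne
    have hpos : 0 < ‖T (eC0 𝕜 γ)‖ := norm_pos_iff.mpr hne
    obtain ⟨n, hn⟩ := exists_nat_gt (‖T‖ / ‖T (eC0 𝕜 γ)‖)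
    have h3 : (n : ℝ) ≤ ‖T‖ / ‖T (eC0 𝕜 γ)‖ := (le_div_iff₀ hpos).mpr (key n)
    linarith
  -- `T` kills functions vanishing on the union of finite orbits
  have hB : ∀ y : ZeroAtInftyContinuousMap Γ 𝕜,
      (∀ γ, (orbitOf G γ).Finite → y γ = 0) → T y = 0 := by
    intro y hy
    have key : ∀ δ : ℝ, 0 < δ → ‖T y‖ ≤ ‖T‖ * δ := by
      intro δ hδ
      have hco : ∀ᶠ γ in Filter.cocompact Γ, ‖y γ‖ < δ := by
        have h0 := y.zero_at_infty'
        have := Metric.tendsto_nhds.mp h0 δ hδ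
        filter_upwards [this] with γ hγ
        rwa [dist_zero_right] at hγ
      obtain ⟨K, hK, hKs⟩ := Filter.mem_cocompact.mp hco
      have hKfin : K.Finite := hK.finite_of_discrete
      set s : Finset Γ := hKfin.toFinset with hsdef
      set z : ZeroAtInftyContinuousMap Γ 𝕜 := ∑ γ ∈ s, y γ • eC0 𝕜 γ with hz
      have hTz : T z = 0 := by
        rw [hz, map_sum]
        refine Finset.sum_eq_zero fun γ _ => ?_
        rw [map_smul]
        by_cases hfo : (orbitOf G γ).Finite
        · rw [hy γ hfo]; simp
        · rw [hA γ hfo]; simp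
      have hyz : ‖y - z‖ ≤ δ := by
        refine norm_le_of_forall hδ.le fun γ' => ?_
        have hzval : z γ' = if γ' ∈ s then y γ' else 0 := by
          rw [hz, MyAux.sum_apply]
          have : ∀ γ ∈ s, (y γ • eC0 𝕜 γ) γ' = if γ' = γ then y γ else 0 := by
            intro γ _
            simp only [ZeroAtInftyContinuousMap.coe_smul, Pi.smul_apply, eC0_apply,
              smul_eq_mul]
            split <;> simp
          rw [Finset.sum_congr rfl this, Finset.sum_ite_eq s γ' (fun γ => y γ)]
        have hsub : (y - z) γ' = y γ' - z γ' := by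
          rw [ZeroAtInftyContinuousMap.coe_sub]; rfl
        by_cases hmem : γ' ∈ s
        · rw [hsub, hzval, if_pos hmem, sub_self, norm_zero]; exact hδ.le
        · rw [hsub, hzval, if_neg hmem, sub_zero]
          have : γ' ∉ K := fun h => hmem (hKfin.mem_toFinset.mpr h)
          exact (hKs this).le
      calc ‖T y‖ = ‖T (y - z)‖ := by rw [map_sub, hTz, sub_zero]
      _ ≤ ‖T‖ * ‖y - z‖ := T.le_opNorm _
      _ ≤ ‖T‖ * δ := by gcongr
    by_contra hne
    have hpos : 0 < ‖T y‖ := norm_pos_iff.mpr hne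
    have hd : 0 < ‖T y‖ / (‖T‖ + 1) := by positivity
    have h1 := key _ hd
    have h2 : ‖T‖ * (‖T y‖ / (‖T‖ + 1)) < (‖T‖ + 1) * (‖T y‖ / (‖T‖ + 1)) := by
      apply mul_lt_mul_of_pos_right _ hd
      linarith
    rw [mul_div_cancel₀ _ (by positivity : (‖T‖ : ℝ) + 1 ≠ 0)] at h2
    linarith
  -- The union of finite orbits is finite
  set Fset : Set Γ := {γ : Γ | (orbitOf G γ).Finite} with hFset
  have hFfin : Fset.Finite := by
    have hsub : Fset ⊆ ⋃₀ {S ∈ orbitsOf G | S.Finite} := by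
      intro γ hγ
      refine ⟨orbitOf G γ, ⟨⟨γ, rfl⟩, hγ⟩, ⟨1, G.one_mem, rfl⟩⟩
    exact (Set.Finite.sUnion hfin fun S hS => hS.2).subset hsub
  set Fs : Finset Γ := hFfin.toFinset with hFs
  have hFs_mem : ∀ γ : Γ, γ ∈ Fs ↔ (orbitOf G γ).Finite := fun γ => hFfin.mem_toFinset
  -- The finite-dimensional piece
  set φ : ({γ // γ ∈ Fs} → 𝕜) →ₗ[𝕜] ZeroAtInftyContinuousMap Γ 𝕜 :=
    { toFun := fun c => ∑ γ ∈ Fs.attach, c γ • eC0 𝕜 (γ : Γ)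
      map_add' := by
        intro a b
        rw [← Finset.sum_add_distrib]
        exact Finset.sum_congr rfl fun γ _ => add_smul (a γ) (b γ) (eC0 𝕜 (γ : Γ))
      map_smul' := by
        intro m a
        rw [RingHom.id_apply, Finset.smul_sum]
        exact Finset.sum_congr rfl fun γ _ => (smul_smul m (a γ) (eC0 𝕜 (γ : Γ))).symm } with hφ
  have hφ_apply : ∀ (c : {γ // γ ∈ Fs} → 𝕜) (δ : Γ),
      φ c δ = if h : δ ∈ Fs then c ⟨δ, h⟩ else 0 := by
    intro c δ
    show (∑ γ ∈ Fs.attach, c γ • eC0 𝕜 (γ : Γ)) δ = _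
    rw [MyAux.sum_apply]
    by_cases h : δ ∈ Fs
    · rw [dif_pos h]
      refine (Finset.sum_eq_single (⟨δ, h⟩ : {γ // γ ∈ Fs}) ?_ ?_).trans ?_
      · intro γ _ hne
        have : δ ≠ (γ : Γ) := fun e => hne (by ext; exact e.symm)
        simp [this]
      · intro habs; exact absurd (Finset.mem_attach _ _) habs
      · simp
    · rw [dif_neg h]
      refine Finset.sum_eq_zero fun γ _ => ?_
      have : δ ≠ (γ : Γ) := fun e => h (e ▸ γ.2)
      simp [this]
  have hφcont : Continuous φ := φ.continuous_of_finiteDimensional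
  set K : Set (ZeroAtInftyContinuousMap Γ 𝕜) := φ '' Metric.closedBall 0 1 with hKdef
  have hKcpt : IsCompact K := (isCompact_closedBall (0 : {γ // γ ∈ Fs} → 𝕜) 1).image hφcont
  have hKne : K.Nonempty := ⟨φ 0, ⟨0, Metric.mem_closedBall_self zero_le_one, rfl⟩⟩
  obtain ⟨x₀, hx₀K, hx₀max⟩ := hKcpt.exists_isMaxOn hKne
    ((continuous_norm.comp T.continuous).continuousOn)
  obtain ⟨c₀, hc₀, hc₀x⟩ := hx₀K
  have hc₀norm : ‖c₀‖ ≤ 1 := by rwa [Metric.mem_closedBall, dist_zero_right] at hc₀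
  -- x₀ properties
  have hx₀norm : ‖x₀‖ ≤ 1 := by
    refine norm_le_of_forall zero_le_one fun δ => ?_
    rw [← hc₀x, hφ_apply]
    split
    · exact (norm_le_pi_norm c₀ _).trans hc₀norm
    · simp
  have hx₀supp : ∀ δ, δ ∉ Fs → x₀ δ = 0 := by
    intro δ hδ
    rw [← hc₀x, hφ_apply, dif_neg hδ]
  -- T x = T (P x) and the max dominates the unit ball
  have hball : ∀ x : ZeroAtInftyContinuousMap Γ 𝕜, ‖x‖ ≤ 1 → ‖T x‖ ≤ ‖T x₀‖ := by
    intro x hx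
    set c : {γ // γ ∈ Fs} → 𝕜 := fun γ => x (γ : Γ) with hc
    have hcball : c ∈ Metric.closedBall (0 : {γ // γ ∈ Fs} → 𝕜) 1 := by
      rw [Metric.mem_closedBall, dist_zero_right]
      refine (pi_norm_le_iff_of_nonneg zero_le_one).mpr fun γ => ?_
      exact (apply_norm_le x (γ : Γ)).trans hx
    have hTeq : T x = T (φ c) := by
      have h0 : T (x - φ c) = 0 := by
        refine hB _ fun γ hγ => ?_
        have hmem : γ ∈ Fs := (hFs_mem γ).mpr hγ
        have : (x - φ c) γ = x γ - φ c γ := by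
          rw [ZeroAtInftyContinuousMap.coe_sub]; rfl
        rw [this, hφ_apply, dif_pos hmem, hc, sub_self]
      exact (sub_eq_zero.mp ((map_sub T x (φ c)).symm.trans h0))
    rw [hTeq]
    exact hx₀max ⟨c, hcball, rfl⟩
  -- ‖T‖ = ‖T x₀‖
  have hTnorm : ‖T‖ = ‖T x₀‖ := by
    refine le_antisymm ?_ ?_
    · refine T.opNorm_le_bound (norm_nonneg _) fun x => ?_
      rcases eq_or_ne x 0 with rfl | hx0
      · simp
      · have hxpos : 0 < ‖x‖ := norm_pos_iff.mpr hx0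
        set a : 𝕜 := (‖x‖ : 𝕜)⁻¹ with ha
        have hax : ‖a • x‖ ≤ 1 := by
          have h := norm_smul a x
          rw [h, ha, norm_inv, RCLike.norm_ofReal, abs_of_pos hxpos,
            inv_mul_cancel₀ hxpos.ne']
        have h1 : ‖T (a • x)‖ ≤ ‖T x₀‖ := hball _ hax
        have h2 : T x = (‖x‖ : 𝕜) • T (a • x) := by
          rw [map_smul, smul_smul, ha, mul_inv_cancel₀, one_smul]
          exact_mod_cast RCLike.ofReal_ne_zero.mpr hxpos.ne'
        calc ‖T x‖ = ‖(‖x‖ : 𝕜)‖ * ‖T (a • x)‖ := by rw [h2, norm_smul]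
        _ = ‖x‖ * ‖T (a • x)‖ := by rw [RCLike.norm_ofReal, abs_of_pos hxpos]
        _ ≤ ‖x‖ * ‖T x₀‖ := mul_le_mul_of_nonneg_left h1 hxpos.le
        _ = ‖T x₀‖ * ‖x‖ := mul_comm _ _
    · calc ‖T x₀‖ ≤ ‖T‖ * ‖x₀‖ := T.le_opNorm _
      _ ≤ ‖T‖ * 1 := by gcongr
      _ = ‖T‖ := mul_one _
  -- Fix up the norm of the attaining vector
  obtain ⟨γ₀, hγ₀⟩ := Infinite.exists_notMem_finset Fs
  set x₁ : ZeroAtInftyContinuousMap Γ 𝕜 := x₀ + eC0 𝕜 γ₀ with hx₁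
  have hx₁γ₀ : x₁ γ₀ = 1 := by
    rw [hx₁]
    have : (x₀ + eC0 𝕜 γ₀) γ₀ = x₀ γ₀ + eC0 𝕜 γ₀ γ₀ := rfl
    rw [this, hx₀supp γ₀ hγ₀, eC0_apply, if_pos rfl, zero_add]
  refine ⟨x₁, ?_, ?_⟩
  · refine le_antisymm ?_ ?_
    · refine norm_le_of_forall zero_le_one fun δ => ?_
      have happ : x₁ δ = x₀ δ + eC0 𝕜 γ₀ δ := rfl
      rcases eq_or_ne δ γ₀ with rfl | hδ
      · rw [hx₁γ₀]; simp
      · rw [happ, eC0_apply, if_neg hδ, add_zero]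
        exact (apply_norm_le x₀ δ).trans hx₀norm
    · have := apply_norm_le x₁ γ₀
      rwa [hx₁γ₀, norm_one] at this
  · have hTe : T (eC0 𝕜 γ₀) = 0 := hA γ₀ (fun h => hγ₀ ((hFs_mem γ₀).mpr h))
    rw [hx₁, map_add, hTe, add_zero, hTnorm]


end
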